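/- (Uniqueness) Let $(A_t)_{t\in\mathbb{Z}}$ be i.i.d. random nonnegative $n\times n$ matrices with $\rho(E[A_0]) < 1$. If $(Y_t)$ and $(Z_t)$ are two stationary $L^1$ processes of nonnegative random vectors both satisfying $X_t = A_t X_{t-1} + B_t$ a.s. (with the same $(A_t)$, $(B_t)$ and appropriate independence of $A_t$ from past states), then $E|Y_t - Z_t| = 0$, i.e. $Y_t = Z_t$ almost surely for every $t$. -/

import Mathlib

open MeasureTheory ProbabilityTheory Matrix Filter Topology

/-- Matrices carry the product (Borel) measurable structure. -/
instance matrixMeasurableSpace {m n : Type*} {α : Type*} [MeasurableSpace α] :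
    MeasurableSpace (Matrix m n α) :=
  (inferInstance : MeasurableSpace (m → n → α))

/-- `prodA A t ω k = A_t(ω) A_{t-1}(ω) ⋯ A_{t-k+1}(ω)` (`k` factors); the empty product is
the identity. -/
noncomputable def prodA {n : ℕ} {Ω : Type*} (A : ℤ → Ω → Matrix (Fin n) (Fin n) ℝ)
    (t : ℤ) (ω : Ω) : ℕ → Matrix (Fin n) (Fin n) ℝ
  | 0 => 1
  | k + 1 => prodA A t ω k * A (t - k) ω

/-- The (entrywise) mean matrix `Ā = E[A₀]`. -/
noncomputable def matMean {n : ℕ} {Ω : Type*} [MeasurableSpace Ω] (μ : Measure Ω)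
    (A0 : Ω → Matrix (Fin n) (Fin n) ℝ) : Matrix (Fin n) (Fin n) ℝ :=
  Matrix.of fun i j => ∫ ω, A0 ω i j ∂μ

/-- The mean vector `B̄ = E[B₀]`. -/
noncomputable def vecMean {n : ℕ} {Ω : Type*} [MeasurableSpace Ω] (μ : Measure Ω)
    (B0 : Ω → Fin n → ℝ) : Fin n → ℝ :=
  fun i => ∫ ω, B0 ω i ∂μ

/-- `ρ(M) < 1`: every (complex) eigenvalue of the real matrix `M` has modulus `< 1`. -/
def specLtOne {n : ℕ} (M : Matrix (Fin n) (Fin n) ℝ) : Prop :=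
  ∀ z ∈ spectrum ℂ (M.map (algebraMap ℝ ℂ)), ‖z‖ < 1


set_option linter.unusedSectionVars false

open scoped ENNReal NNReal

section Helpers
variable {n : ℕ} {Ω : Type*} [MeasurableSpace Ω]

lemma measurable_entry {f : Ω → Matrix (Fin n) (Fin n) ℝ} (hf : Measurable f) (i j : Fin n) :
    Measurable fun ω => f ω i j :=
  (measurable_pi_apply j).comp ((measurable_pi_apply i).comp hf)

lemma measurable_matrix_of (f : Ω → Matrix (Fin n) (Fin n) ℝ)
    (h : ∀ i j, Measurable fun ω => f ω i j) : Measurable f :=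
  measurable_pi_lambda _ fun i => measurable_pi_lambda _ fun j => h i j

lemma measurable_matrix_mul {f g : Ω → Matrix (Fin n) (Fin n) ℝ} (hf : Measurable f)
    (hg : Measurable g) : Measurable fun ω => f ω * g ω :=
  measurable_matrix_of _ fun i j => by
    simp only [Matrix.mul_apply]
    exact Finset.measurable_sum _ fun l _ =>
      (measurable_entry hf i l).mul (measurable_entry hg l j)

noncomputable def Fk (n : ℕ) :
    (k : ℕ) → (Fin k → Matrix (Fin n) (Fin n) ℝ) → Matrix (Fin n) (Fin n) ℝ
  | 0, _ => 1
  | k + 1, x => Fk n k (fun i => x i.castSucc) * x (Fin.last k)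

lemma measurable_Fk (n k : ℕ) : Measurable (Fk n k) := by
  induction k with
  | zero => exact measurable_const
  | succ k ih =>
      exact measurable_matrix_mul
        (ih.comp (measurable_pi_lambda _ fun i => measurable_pi_apply _))
        (measurable_pi_apply _)

lemma prodA_eq_Fk (A : ℤ → Ω → Matrix (Fin n) (Fin n) ℝ) (t : ℤ) (ω : Ω) (k : ℕ) :
    prodA A t ω k = Fk n k (fun i : Fin k => A (t - (i : ℕ)) ω) := by
  induction k with
  | zero => rfl
  | succ k ih =>
      show prodA A t ω k * A (t - k) ω = _
      rw [ih]
      simp [Fk, Fin.coe_castSucc, Fin.val_last]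

lemma measurable_prodA {A : ℤ → Ω → Matrix (Fin n) (Fin n) ℝ} (hA : ∀ t, Measurable (A t))
    (t : ℤ) (k : ℕ) : Measurable fun ω => prodA A t ω k := by
  induction k with
  | zero => exact measurable_const
  | succ k ih => exact measurable_matrix_mul ih (hA _)

lemma prodA_indep {B : ℤ → Ω → Fin n → ℝ} {μ : Measure Ω}
    {A : ℤ → Ω → Matrix (Fin n) (Fin n) ℝ}
    (hmeas : ∀ t, Measurable fun ω => (A t ω, B t ω))
    (hindep : iIndepFun (fun t ω => (A t ω, B t ω)) μ)
    (t : ℤ) (k : ℕ) :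
    IndepFun (fun ω => prodA A t ω k) (fun ω => (A (t - k) ω, B (t - k) ω)) μ := by
  classical
  set S : Finset ℤ := (Finset.range k).image (fun j : ℕ => t - (j : ℤ)) with hS
  set T : Finset ℤ := {t - (k : ℤ)} with hT
  have hST : Disjoint S T := by
    simp only [hS, hT, Finset.disjoint_singleton_right, Finset.mem_image, Finset.mem_range]
    rintro ⟨j, hj, hje⟩
    omega
  have base := hindep.indepFun_finset S T hST hmeas
  have hmem : ∀ i : Fin k, (t - (i : ℕ) : ℤ) ∈ S := fun i =>
    Finset.mem_image.mpr ⟨i, Finset.mem_range.mpr i.isLt, rfl⟩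
  set φ : ((s : S) → Matrix (Fin n) (Fin n) ℝ × (Fin n → ℝ)) → Matrix (Fin n) (Fin n) ℝ :=
    fun v => Fk n k (fun i : Fin k => (v ⟨t - (i : ℕ), hmem i⟩).1) with hφ
  have hφm : Measurable φ :=
    (measurable_Fk n k).comp
      (measurable_pi_lambda _ fun i => measurable_fst.comp (measurable_pi_apply _))
  set ψ : ((s : T) → Matrix (Fin n) (Fin n) ℝ × (Fin n → ℝ)) →
      Matrix (Fin n) (Fin n) ℝ × (Fin n → ℝ) :=
    fun v => v ⟨t - (k : ℤ), Finset.mem_singleton_self _⟩ with hψ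
  have hψm : Measurable ψ := measurable_pi_apply _
  have := base.comp hφm hψm
  have h1 : (fun ω => φ (fun s : S => (A s ω, B s ω))) = fun ω => prodA A t ω k := by
    funext ω
    rw [prodA_eq_Fk]
  have h2 : (fun ω => ψ (fun s : T => (A s ω, B s ω)))
      = fun ω => (A (t - k) ω, B (t - k) ω) := rfl
  rw [← h1, ← h2]; exact this

end Helpers

section Law
variable {n : ℕ} {Ω : Type*} [MeasurableSpace Ω] {μ : Measure Ω} [IsProbabilityMeasure μ]
  {A : ℤ → Ω → Matrix (Fin n) (Fin n) ℝ} {B : ℤ → Ω → Fin n → ℝ}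

lemma A_law (hmeas : ∀ t, Measurable fun ω => (A t ω, B t ω))
    (hident : ∀ t, Measure.map (fun ω => (A t ω, B t ω)) μ
      = Measure.map (fun ω => (A 0 ω, B 0 ω)) μ)
    (hAint : ∀ i j, Integrable (fun ω => A 0 ω i j) μ) (s : ℤ) (i j : Fin n) :
    Integrable (fun ω => A s ω i j) μ ∧ ∫ ω, A s ω i j ∂μ = matMean μ (A 0) i j := by
  set φ : Matrix (Fin n) (Fin n) ℝ × (Fin n → ℝ) → ℝ := fun p => p.1 i j with hφ
  have hφm : Measurable φ := measurable_entry measurable_fst i j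
  have h1 : ∀ u : ℤ, Integrable (fun ω => A u ω i j) μ
      ↔ Integrable φ (Measure.map (fun ω => (A u ω, B u ω)) μ) := fun u =>
    (integrable_map_measure hφm.aestronglyMeasurable (hmeas u).aemeasurable).symm
  have h2 : ∀ u : ℤ, ∫ ω, A u ω i j ∂μ
      = ∫ p, φ p ∂(Measure.map (fun ω => (A u ω, B u ω)) μ) := fun u =>
    (integral_map (hmeas u).aemeasurable hφm.aestronglyMeasurable).symm
  constructor
  · rw [h1 s, hident s, ← h1 0]; exact hAint i j
  · rw [h2 s, hident s, ← h2 0]; rfl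

lemma prodA_moment (hmeas : ∀ t, Measurable fun ω => (A t ω, B t ω))
    (hindep : iIndepFun (fun t ω => (A t ω, B t ω)) μ)
    (hident : ∀ t, Measure.map (fun ω => (A t ω, B t ω)) μ
      = Measure.map (fun ω => (A 0 ω, B 0 ω)) μ)
    (hAint : ∀ i j, Integrable (fun ω => A 0 ω i j) μ) (t : ℤ) (k : ℕ) :
    (∀ i j, Integrable (fun ω => prodA A t ω k i j) μ) ∧
    (∀ i j, ∫ ω, prodA A t ω k i j ∂μ = (matMean μ (A 0) ^ k) i j) := by
  induction k with
  | zero =>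
      constructor
      · intro i j
        simpa [prodA] using (integrable_const ((1 : Matrix (Fin n) (Fin n) ℝ) i j))
      · intro i j
        simp [prodA]
  | succ k ih =>
      have hentry : ∀ i j, (fun ω => prodA A t ω (k+1) i j)
          = fun ω => ∑ l, prodA A t ω k i l * A (t - k) ω l j := by
        intro i j; funext ω
        show (prodA A t ω k * A (t - k) ω) i j = _
        rw [Matrix.mul_apply]
      have hsind : ∀ i l j, IndepFun (fun ω => prodA A t ω k i l)
          (fun ω => A (t - k) ω l j) μ := fun i l j =>
        (prodA_indep hmeas hindep t k).comp (measurable_entry measurable_id i l)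
          (measurable_entry measurable_fst l j)
      have hintmul : ∀ i l j, Integrable (fun ω => prodA A t ω k i l * A (t - k) ω l j) μ :=
        fun i l j => (hsind i l j).integrable_mul (ih.1 i l)
          ((A_law hmeas hident hAint (t - k) l j).1)
      constructor
      · intro i j
        rw [hentry i j]
        exact integrable_finset_sum _ fun l _ => hintmul i l j
      · intro i j
        rw [hentry i j, integral_finset_sum _ fun l _ => hintmul i l j]
        have : ∀ l, ∫ ω, prodA A t ω k i l * A (t - k) ω l j ∂μ
            = (matMean μ (A 0) ^ k) i l * matMean μ (A 0) l j := by
          intro l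
          have h := (hsind i l j).integral_mul_eq_mul_integral (ih.1 i l).aestronglyMeasurable
            ((A_law hmeas hident hAint (t - k) l j).1).aestronglyMeasurable
          rw [show integral μ ((fun ω => prodA A t ω k i l) * fun ω => A (t - (k:ℤ)) ω l j)
              = ∫ ω, prodA A t ω k i l * A (t - (k:ℤ)) ω l j ∂μ from rfl] at h
          rw [h, ih.2 i l, (A_law hmeas hident hAint (t - k) l j).2]
        rw [Finset.sum_congr rfl fun l _ => this l, pow_succ, Matrix.mul_apply]

end Law

section SpecSec
attribute [local instance] Matrix.linftyOpNormedRing Matrix.linftyOpNormedAlgebra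

lemma aux_pow_tendsto {n : ℕ} (M : Matrix (Fin n) (Fin n) ℝ) (h : specLtOne M) (i j : Fin n) :
    Tendsto (fun k => (M ^ k) i j) atTop (𝓝 0) := by
  have : Nonempty (Fin n) := ⟨i⟩
  set N : Matrix (Fin n) (Fin n) ℂ := M.map (algebraMap ℝ ℂ) with hN
  have hcs : CompleteSpace (Matrix (Fin n) (Fin n) ℂ) := FiniteDimensional.complete ℂ _
  have hρ : spectralRadius ℂ N < 1 := by
    have := spectrum.spectralRadius_lt_of_forall_lt (a := N) (r := 1)
      (fun z hz => by simpa [← norm_toNNReal] using (h z hz))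
    simpa using this
  obtain ⟨r, hr1, hr2⟩ := ENNReal.lt_iff_exists_nnreal_btwn.mp hρ
  have hg := spectrum.pow_nnnorm_pow_one_div_tendsto_nhds_spectralRadius N
  have hev : ∀ᶠ k : ℕ in atTop, (‖N ^ k‖₊ : ℝ≥0∞) ^ (1 / (k:ℝ)) < (r : ℝ≥0∞) :=
    hg.eventually_lt_const hr1
  have hev2 : ∀ᶠ k : ℕ in atTop, |(M ^ k) i j| ≤ (r:ℝ) ^ k := by
    filter_upwards [hev, eventually_ge_atTop 1] with k hk hk1
    have hkpos : (0:ℝ) < (k:ℝ) := by exact_mod_cast hk1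
    have hklt : (‖N ^ k‖₊ : ℝ≥0∞) < (r:ℝ≥0∞) ^ (k:ℕ) := by
      have h2 := ENNReal.rpow_lt_rpow hk hkpos
      rwa [← ENNReal.rpow_mul, one_div_mul_cancel (ne_of_gt hkpos), ENNReal.rpow_one,
        ENNReal.rpow_natCast] at h2
    have hnorm : ‖N ^ k‖ ≤ (r:ℝ) ^ k := by
      have := le_of_lt hklt
      rw [← ENNReal.coe_pow, ENNReal.coe_le_coe] at this
      exact_mod_cast this
    have hentry : |(M ^ k) i j| ≤ ‖N ^ k‖ := by
      have hmap : N ^ k = (M ^ k).map (algebraMap ℝ ℂ) := by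
        rw [hN, ← RingHom.mapMatrix_apply, ← map_pow, RingHom.mapMatrix_apply]
      have h1 : ‖(N ^ k) i j‖₊ ≤ ∑ j', ‖(N ^ k) i j'‖₊ :=
        Finset.single_le_sum (f := fun j' => ‖(N ^ k) i j'‖₊) (fun _ _ => zero_le) (Finset.mem_univ j)
      have h2 : (∑ j', ‖(N ^ k) i j'‖₊) ≤ ‖N ^ k‖₊ := by
        rw [Matrix.linfty_opNNNorm_def]
        exact Finset.le_sup (f := fun i => ∑ j', ‖(N ^ k) i j'‖₊) (Finset.mem_univ i)
      have h3 : ‖(N ^ k) i j‖ ≤ ‖N ^ k‖ := by exact_mod_cast h1.trans h2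
      have h4 : (N ^ k) i j = algebraMap ℝ ℂ ((M ^ k) i j) := by rw [hmap]; rfl
      rw [h4] at h3
      simpa [Complex.norm_real] using h3
    exact hentry.trans hnorm
  have hr2' : (r:ℝ) < 1 := by exact_mod_cast hr2
  exact squeeze_zero_norm' (by simpa [Real.norm_eq_abs] using hev2)
    (tendsto_pow_atTop_nhds_zero_of_lt_one r.coe_nonneg hr2')

end SpecSec

/-- **Uniqueness.** If `ρ(E[A₀]) < 1` and `(Y_t)`, `(Z_t)` are two (jointly)
stationary `L¹` processes of nonnegative random vectors satisfying the same recursion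
`X_t = A_t X_{t-1} + B_t` a.s., with the products of the `A`'s independent of the past
states, then `Y_t = Z_t` almost surely for every `t`. -/
theorem stmt6 {n : ℕ} {Ω : Type*} [MeasurableSpace Ω] (μ : Measure Ω) [IsProbabilityMeasure μ]
    (A : ℤ → Ω → Matrix (Fin n) (Fin n) ℝ) (B : ℤ → Ω → Fin n → ℝ)
    (hmeas : ∀ t, Measurable fun ω => (A t ω, B t ω))
    (hindep : iIndepFun (fun t ω => (A t ω, B t ω)) μ)
    (hident : ∀ t, Measure.map (fun ω => (A t ω, B t ω)) μ
      = Measure.map (fun ω => (A 0 ω, B 0 ω)) μ)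
    (hApos : ∀ t, ∀ᵐ ω ∂μ, ∀ i j, 0 ≤ A t ω i j)
    (hAint : ∀ i j, Integrable (fun ω => A 0 ω i j) μ)
    (hspec : specLtOne (matMean μ (A 0)))
    (Y Z : ℤ → Ω → Fin n → ℝ)
    (hYmeas : ∀ t, Measurable (Y t)) (hZmeas : ∀ t, Measurable (Z t))
    (hYpos : ∀ t, ∀ᵐ ω ∂μ, ∀ i, 0 ≤ Y t ω i)
    (hZpos : ∀ t, ∀ᵐ ω ∂μ, ∀ i, 0 ≤ Z t ω i)
    (hYint : ∀ t i, Integrable (fun ω => Y t ω i) μ)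
    (hZint : ∀ t i, Integrable (fun ω => Z t ω i) μ)
    (hstat : ∀ t, Measure.map (fun ω => (Y t ω, Z t ω)) μ
      = Measure.map (fun ω => (Y 0 ω, Z 0 ω)) μ)
    (hYrec : ∀ t, ∀ᵐ ω ∂μ, Y t ω = A t ω *ᵥ Y (t - 1) ω + B t ω)
    (hZrec : ∀ t, ∀ᵐ ω ∂μ, Z t ω = A t ω *ᵥ Z (t - 1) ω + B t ω)
    (hpast : ∀ (t : ℤ) (k : ℕ), IndepFun (fun ω => prodA A t ω k)
      (fun ω => (Y (t - k) ω, Z (t - k) ω)) μ) :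
    ∀ t : ℤ, ∀ᵐ ω ∂μ, Y t ω = Z t ω := by
  intro t
  set M := matMean μ (A 0) with hM
  -- the recursion for W = Y - Z, iterated k times
  have hWrec : ∀ (s : ℤ) (k : ℕ), ∀ᵐ ω ∂μ,
      Y s ω - Z s ω = prodA A s ω k *ᵥ (Y (s - k) ω - Z (s - k) ω) := by
    intro s k
    induction k with
    | zero =>
        filter_upwards with ω
        simp [prodA]
    | succ k ih =>
        filter_upwards [ih, hYrec (s - k), hZrec (s - k)] with ω hω hy hz
        have hw : Y (s - k) ω - Z (s - k) ω
            = A (s - k) ω *ᵥ (Y (s - k - 1) ω - Z (s - k - 1) ω) := by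
          rw [hy, hz, Matrix.mulVec_sub]
          abel
        have hcast : s - ((k : ℕ) + 1 : ℤ) = s - k - 1 := by ring
        have hcast2 : ((k + 1 : ℕ) : ℤ) = (k : ℤ) + 1 := by push_cast; ring
        calc Y s ω - Z s ω = prodA A s ω k *ᵥ (Y (s - k) ω - Z (s - k) ω) := hω
          _ = prodA A s ω k *ᵥ (A (s - k) ω *ᵥ (Y (s - k - 1) ω - Z (s - k - 1) ω)) := by
              rw [hw]
          _ = (prodA A s ω k * A (s - k) ω) *ᵥ (Y (s - k - 1) ω - Z (s - k - 1) ω) :=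
              Matrix.mulVec_mulVec _ _ _
          _ = prodA A s ω (k + 1) *ᵥ (Y (s - (k + 1 : ℕ)) ω - Z (s - (k + 1 : ℕ)) ω) := by
              rw [hcast2, hcast]
              rfl
  -- nonnegativity of the matrix products
  have hPpos : ∀ (k : ℕ), ∀ᵐ ω ∂μ, ∀ i j, 0 ≤ prodA A t ω k i j := by
    intro k
    induction k with
    | zero =>
        filter_upwards with ω i j
        by_cases h : i = j <;> simp [prodA, Matrix.one_apply, h]
    | succ k ih =>
        filter_upwards [ih, hApos (t - k)] with ω h1 h2 i j
        show 0 ≤ (prodA A t ω k * A (t - k) ω) i j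
        rw [Matrix.mul_apply]
        exact Finset.sum_nonneg fun l _ => mul_nonneg (h1 i l) (h2 l j)
  -- integrability of |W|
  have hWint : ∀ (s : ℤ) (j : Fin n), Integrable (fun ω => |Y s ω j - Z s ω j|) μ :=
    fun s j => ((hYint s j).sub (hZint s j)).abs
  -- stationarity of E|W|
  have hWlaw : ∀ (s : ℤ) (j : Fin n),
      ∫ ω, |Y s ω j - Z s ω j| ∂μ = ∫ ω, |Y 0 ω j - Z 0 ω j| ∂μ := by
    intro s j
    set φ : (Fin n → ℝ) × (Fin n → ℝ) → ℝ := fun p => |p.1 j - p.2 j| with hφ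
    have hφm : Measurable φ :=
      (((measurable_pi_apply j).comp measurable_fst).sub
        ((measurable_pi_apply j).comp measurable_snd)).abs
    have hg : ∀ u : ℤ, AEMeasurable (fun ω => (Y u ω, Z u ω)) μ := fun u =>
      ((hYmeas u).prodMk (hZmeas u)).aemeasurable
    calc ∫ ω, |Y s ω j - Z s ω j| ∂μ
        = ∫ p, φ p ∂(Measure.map (fun ω => (Y s ω, Z s ω)) μ) :=
          (integral_map (hg s) hφm.aestronglyMeasurable).symm
      _ = ∫ p, φ p ∂(Measure.map (fun ω => (Y 0 ω, Z 0 ω)) μ) := by rw [hstat s]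
      _ = ∫ ω, |Y 0 ω j - Z 0 ω j| ∂μ := integral_map (hg 0) hφm.aestronglyMeasurable
  -- the key bound
  have hbd : ∀ (k : ℕ) (i : Fin n), ∫ ω, |Y t ω i - Z t ω i| ∂μ
      ≤ ∑ j, (M ^ k) i j * ∫ ω, |Y 0 ω j - Z 0 ω j| ∂μ := by
    intro k i
    have hPk := prodA_moment hmeas hindep hident hAint t k
    have hia : ∀ j, IndepFun (fun ω => prodA A t ω k i j)
        (fun ω => |Y (t - k) ω j - Z (t - k) ω j|) μ := fun j =>
      (hpast t k).comp (measurable_entry measurable_id i j)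
        ((((measurable_pi_apply j).comp measurable_fst).sub
          ((measurable_pi_apply j).comp measurable_snd)).abs)
    have hintm : ∀ j, Integrable
        (fun ω => prodA A t ω k i j * |Y (t - k) ω j - Z (t - k) ω j|) μ :=
      fun j => (hia j).integrable_mul (hPk.1 i j) (hWint (t - k) j)
    have hub : ∀ᵐ ω ∂μ, |Y t ω i - Z t ω i|
        ≤ ∑ j, prodA A t ω k i j * |Y (t - k) ω j - Z (t - k) ω j| := by
      filter_upwards [hWrec t k, hPpos k] with ω h1 h2
      have he : Y t ω i - Z t ω i
          = ∑ j, prodA A t ω k i j * (Y (t - k) ω j - Z (t - k) ω j) := by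
        have := congrFun h1 i
        simpa [Matrix.mulVec, dotProduct] using this
      rw [he]
      refine (Finset.abs_sum_le_sum_abs _ _).trans (Finset.sum_le_sum fun j _ => ?_)
      rw [abs_mul, abs_of_nonneg (h2 i j)]
    calc ∫ ω, |Y t ω i - Z t ω i| ∂μ
        ≤ ∫ ω, ∑ j, prodA A t ω k i j * |Y (t - k) ω j - Z (t - k) ω j| ∂μ :=
          integral_mono_ae (hWint t i) (integrable_finset_sum _ fun j _ => hintm j) hub
      _ = ∑ j, ∫ ω, prodA A t ω k i j * |Y (t - k) ω j - Z (t - k) ω j| ∂μ :=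
          integral_finset_sum _ fun j _ => hintm j
      _ = ∑ j, (M ^ k) i j * ∫ ω, |Y 0 ω j - Z 0 ω j| ∂μ := by
          refine Finset.sum_congr rfl fun j _ => ?_
          have h := (hia j).integral_mul_eq_mul_integral (hPk.1 i j).aestronglyMeasurable (hWint (t - k) j).aestronglyMeasurable
          rw [show integral μ ((fun ω => prodA A t ω k i j)
              * fun ω => |Y (t - (k:ℤ)) ω j - Z (t - (k:ℤ)) ω j|)
            = ∫ ω, prodA A t ω k i j * |Y (t - (k:ℤ)) ω j - Z (t - (k:ℤ)) ω j| ∂μ from rfl] at h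
          rw [h, hPk.2 i j, hWlaw (t - k) j]
  -- conclude
  have hzero : ∀ i : Fin n, ∫ ω, |Y t ω i - Z t ω i| ∂μ = 0 := by
    intro i
    have hconv : Tendsto (fun k : ℕ => ∑ j, (M ^ k) i j * ∫ ω, |Y 0 ω j - Z 0 ω j| ∂μ)
        atTop (𝓝 0) := by
      have := tendsto_finset_sum (Finset.univ : Finset (Fin n))
        (fun j _ => (aux_pow_tendsto M hspec i j).mul_const (∫ ω, |Y 0 ω j - Z 0 ω j| ∂μ))
      simpa using this
    exact le_antisymm (ge_of_tendsto' hconv fun k => hbd k i)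
      (integral_nonneg fun ω => abs_nonneg _)
  have hae : ∀ i : Fin n, ∀ᵐ ω ∂μ, |Y t ω i - Z t ω i| = 0 := fun i =>
    (integral_eq_zero_iff_of_nonneg (fun ω => abs_nonneg _) (hWint t i)).mp (hzero i)
  filter_upwards [ae_all_iff.mpr hae] with ω hω
  funext i
  have := abs_eq_zero.mp (hω i)
  linarith
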